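/- Let (z_k)_{k≥0} be a nonnegative real sequence satisfying z_{k+1} ≤ q z_k² + τ_k z_k + o_k for all k ≥ 0, where q > 0 is a constant, (τ_k) is a nonnegative nonincreasing sequence, and (o_k) is a nonnegative sequence satisfying o_{k+1} = o_k υ t_{k+1}² for a constant υ ∈ (0,1) and a nonnegative nonincreasing sequence (t_k)_{k≥1} with t₁ ≤ 1. Assume z₀ ≤ υ/(3q), τ₀ ≤ υ/3 and o₀ ≤ υ²/(9q), and that r₀ := max{z₀, 3o₀/υ} > 0. Define ρ_k = q r_k + τ_k + (o₀/r₀)∏_{i=0}^{k−1} t_{i+1} and r_{k+1} = max{ r_k ρ_k, r₀ υ^{k+1} ∏_{i=0}^{k} t_{i+1} } (empty products equal 1). Then for all k ≥ 0: z_k ≤ r_k, ρ_k ∈ [0, υ], and r_{k+1}/r_k ≤ υ < 1, so z_k → 0 at an R-linear rate. Moreover, if in addition t_k → 0 and τ_k → 0 as k → ∞, then r_{k+1}/r_k → 0, so z_k → 0 at an R-superlinear rate. -/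

import Mathlib

open Finset Filter

noncomputable section

/-- Generic linear/superlinear convergence of sequences satisfying a
relaxed linear-quadratic recursion. -/
theorem generic_linear_superlinear_sequence
    (q υ : ℝ) (hq : 0 < q) (hυ0 : 0 < υ) (hυ1 : υ < 1)
    (z τ o t r ρ : ℕ → ℝ)
    (hz : ∀ k, 0 ≤ z k) (hτ0' : ∀ k, 0 ≤ τ k) (hτmono : ∀ k, τ (k + 1) ≤ τ k)
    (ho' : ∀ k, 0 ≤ o k)
    (ht0' : ∀ k, 1 ≤ k → 0 ≤ t k) (ht1 : t 1 ≤ 1)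
    (htmono : ∀ k, 1 ≤ k → t (k + 1) ≤ t k)
    (hrec : ∀ k, z (k + 1) ≤ q * z k ^ 2 + τ k * z k + o k)
    (horec : ∀ k, o (k + 1) = o k * υ * t (k + 1) ^ 2)
    (hz0 : z 0 ≤ υ / (3 * q)) (hτ0 : τ 0 ≤ υ / 3) (ho0 : o 0 ≤ υ ^ 2 / (9 * q))
    (hr0 : r 0 = max (z 0) (3 * o 0 / υ)) (hr0pos : 0 < r 0)
    (hρ : ∀ k, ρ k = q * r k + τ k + o 0 / r 0 * ∏ i ∈ Finset.range k, t (i + 1))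
    (hrrec : ∀ k, r (k + 1) =
      max (r k * ρ k) (r 0 * υ ^ (k + 1) * ∏ i ∈ Finset.range (k + 1), t (i + 1))) :
    (∀ k, z k ≤ r k) ∧
    (∀ k, ρ k ∈ Set.Icc 0 υ) ∧
    (∀ k, r (k + 1) / r k ≤ υ) ∧
    Tendsto z atTop (nhds 0) ∧
    ((Tendsto t atTop (nhds 0) ∧ Tendsto τ atTop (nhds 0)) →
      Tendsto (fun k => r (k + 1) / r k) atTop (nhds 0)) := by
  set P : ℕ → ℝ := fun k => ∏ i ∈ Finset.range k, t (i + 1) with hP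
  -- basic bounds on t
  have ht01 : ∀ i, 1 ≤ i → t i ≤ 1 := by
    intro i hi
    induction i with
    | zero => omega
    | succ n ih =>
      rcases Nat.eq_zero_or_pos n with h | h
      · subst h; exact ht1
      · exact le_trans (htmono n h) (ih h)
  have hPnonneg : ∀ k, 0 ≤ P k := fun k =>
    Finset.prod_nonneg (fun i _ => ht0' (i + 1) (by omega))
  have hPle1 : ∀ k, P k ≤ 1 := fun k =>
    Finset.prod_le_one (fun i _ => ht0' (i + 1) (by omega))
      (fun i _ => ht01 (i + 1) (by omega))
  have hPsucc : ∀ k, P (k + 1) = P k * t (k + 1) := fun k =>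
    Finset.prod_range_succ _ _
  -- closed form for o
  have ho_eq : ∀ k, o k = o 0 * υ ^ k * P k ^ 2 := by
    intro k
    induction k with
    | zero => simp [hP]
    | succ n ih =>
      rw [horec n, ih, hPsucc n]
      ring
  have hτle : ∀ k, τ k ≤ τ 0 := by
    intro k
    induction k with
    | zero => exact le_refl _
    | succ n ih => exact le_trans (hτmono n) ih
  -- r 0 bounds
  have h3o : 3 * o 0 / υ ≤ r 0 := hr0 ▸ le_max_right _ _
  have ho0r0 : o 0 / r 0 * P 0 ≤ υ / 3 := by
    have h1 : 3 * o 0 ≤ r 0 * υ := (div_le_iff₀ hυ0).mp h3o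
    have : o 0 / r 0 ≤ υ / 3 := by
      rw [div_le_div_iff₀ hr0pos (by norm_num : (0:ℝ) < 3)]
      linarith
    simpa [hP] using this
  have ho0r0nn : 0 ≤ o 0 / r 0 := div_nonneg (ho' 0) hr0pos.le
  have hr0le : r 0 ≤ υ / (3 * q) := by
    rw [hr0]
    refine max_le hz0 ?_
    have h1 : o 0 * (9 * q) ≤ υ ^ 2 := by
      rw [← le_div_iff₀ (by positivity)]; exact ho0
    rw [div_le_div_iff₀ hυ0 (by positivity)]
    nlinarith
  -- key step lemma
  have keystep : ∀ k, 0 < r k → r k ≤ υ / (3 * q) → r 0 * υ ^ k * P k ≤ r k →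
      0 < ρ k ∧ ρ k ≤ υ ∧ r (k + 1) ≤ υ * r k ∧ (z k ≤ r k → z (k + 1) ≤ r (k + 1)) := by
    intro k hrpos hrle hrP
    have hcnn : 0 ≤ o 0 / r 0 * P k := mul_nonneg ho0r0nn (hPnonneg k)
    have hρpos : 0 < ρ k := by
      rw [hρ]
      have h1 : 0 < q * r k := mul_pos hq hrpos
      have := hτ0' k
      linarith
    have hρle : ρ k ≤ υ := by
      rw [hρ]
      have h1 : q * r k ≤ υ / 3 := by
        have := mul_le_mul_of_nonneg_left hrle hq.le
        have hq3 : q * (υ / (3 * q)) = υ / 3 := by field_simp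
        linarith
      have h2 : τ k ≤ υ / 3 := le_trans (hτle k) hτ0
      have h3 : o 0 / r 0 * P k ≤ υ / 3 := by
        calc o 0 / r 0 * P k ≤ o 0 / r 0 * 1 :=
              mul_le_mul_of_nonneg_left (hPle1 k) ho0r0nn
          _ = o 0 / r 0 * P 0 := by simp [hP]
          _ ≤ υ / 3 := ho0r0
      linarith
    have ht1' : t (k + 1) ≤ 1 := ht01 _ (by omega)
    have ht0'' : 0 ≤ t (k + 1) := ht0' _ (by omega)
    have hstep : r 0 * υ ^ (k + 1) * P (k + 1) ≤ υ * r k := by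
      have heq : r 0 * υ ^ (k + 1) * P (k + 1) = υ * (r 0 * υ ^ k * P k * t (k + 1)) := by
        rw [hPsucc k]; ring
      rw [heq]
      have h4 : r 0 * υ ^ k * P k * t (k + 1) ≤ r k := by
        calc r 0 * υ ^ k * P k * t (k + 1) ≤ r k * t (k + 1) :=
              mul_le_mul_of_nonneg_right hrP ht0''
          _ ≤ r k * 1 := mul_le_mul_of_nonneg_left ht1' hrpos.le
          _ = r k := mul_one _
      exact mul_le_mul_of_nonneg_left h4 hυ0.le
    have hrsucc : r (k + 1) ≤ υ * r k := by
      rw [hrrec k]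
      refine max_le ?_ hstep
      calc r k * ρ k ≤ r k * υ := mul_le_mul_of_nonneg_left hρle hrpos.le
        _ = υ * r k := mul_comm _ _
    refine ⟨hρpos, hρle, hrsucc, fun hzr => ?_⟩
    have hok : o k ≤ o 0 / r 0 * P k * r k := by
      rw [ho_eq k]
      have heq : o 0 * υ ^ k * P k ^ 2 = o 0 / r 0 * P k * (r 0 * υ ^ k * P k) := by
        field_simp
      rw [heq]
      exact mul_le_mul_of_nonneg_left hrP hcnn
    have hb : q * z k ^ 2 + τ k * z k + o k ≤ r k * ρ k := by
      rw [hρ]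
      have h1 : q * z k ^ 2 ≤ q * r k ^ 2 :=
        mul_le_mul_of_nonneg_left (pow_le_pow_left₀ (hz k) hzr 2) hq.le
      have h2 : τ k * z k ≤ τ k * r k := mul_le_mul_of_nonneg_left hzr (hτ0' k)
      nlinarith
    exact (hrec k).trans (hb.trans (hrrec k ▸ le_max_left _ _))
  -- main induction
  have main : ∀ k, z k ≤ r k ∧ 0 < r k ∧ r k ≤ υ / (3 * q) ∧ r 0 * υ ^ k * P k ≤ r k := by
    intro k
    induction k with
    | zero => exact ⟨hr0 ▸ le_max_left _ _, hr0pos, hr0le, by simp [hP]⟩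
    | succ n ih =>
      obtain ⟨hzr, hrpos, hrle, hrP⟩ := ih
      obtain ⟨hρpos, hρle, hrsucc, hzstep⟩ := keystep n hrpos hrle hrP
      have hr1pos : 0 < r (n + 1) :=
        lt_of_lt_of_le (mul_pos hrpos hρpos) (hrrec n ▸ le_max_left _ _)
      refine ⟨hzstep hzr, hr1pos, ?_, hrrec n ▸ le_max_right _ _⟩
      have : υ * r n ≤ r n := by nlinarith
      linarith
  have hzr : ∀ k, z k ≤ r k := fun k => (main k).1
  have hrpos : ∀ k, 0 < r k := fun k => (main k).2.1
  have hratio : ∀ k, r (k + 1) ≤ υ * r k := fun k =>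
    (keystep k (main k).2.1 (main k).2.2.1 (main k).2.2.2).2.2.1
  have hρIcc : ∀ k, ρ k ∈ Set.Icc 0 υ := fun k =>
    ⟨(keystep k (main k).2.1 (main k).2.2.1 (main k).2.2.2).1.le,
     (keystep k (main k).2.1 (main k).2.2.1 (main k).2.2.2).2.1⟩
  have hgeo : ∀ k, r k ≤ r 0 * υ ^ k := by
    intro k
    induction k with
    | zero => simp
    | succ n ih =>
      calc r (n + 1) ≤ υ * r n := hratio n
        _ ≤ υ * (r 0 * υ ^ n) := mul_le_mul_of_nonneg_left ih hυ0.le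
        _ = r 0 * υ ^ (n + 1) := by ring
  have hrtend : Tendsto r atTop (nhds 0) :=
    squeeze_zero (fun k => (hrpos k).le) hgeo
      (by simpa using (tendsto_pow_atTop_nhds_zero_of_lt_one hυ0.le hυ1).const_mul (r 0))
  have hztend : Tendsto z atTop (nhds 0) :=
    squeeze_zero hz (fun k => (hzr k).trans (hgeo k))
      (by simpa using (tendsto_pow_atTop_nhds_zero_of_lt_one hυ0.le hυ1).const_mul (r 0))
  refine ⟨hzr, hρIcc, fun k => ?_, hztend, ?_⟩
  · rw [div_le_iff₀ (hrpos k)]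
    calc r (k + 1) ≤ υ * r k := hratio k
      _ = υ * r k := rfl
  · rintro ⟨htT, hτT⟩
    -- P tends to 0
    have hPtend : Tendsto P atTop (nhds 0) := by
      refine tendsto_of_tendsto_of_tendsto_of_le_of_le' tendsto_const_nhds htT
        (Eventually.of_forall hPnonneg) ?_
      filter_upwards [eventually_ge_atTop 1] with k hk
      match k, hk with
      | (m + 1), _ =>
        rw [hPsucc m]
        calc P m * t (m + 1) ≤ 1 * t (m + 1) :=
              mul_le_mul_of_nonneg_right (hPle1 m) (ht0' _ (by omega))
          _ = t (m + 1) := one_mul _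
    have hρtend : Tendsto ρ atTop (nhds 0) := by
      have h1 : Tendsto (fun k => q * r k + τ k + o 0 / r 0 * P k) atTop (nhds 0) := by
        have := ((hrtend.const_mul q).add hτT).add (hPtend.const_mul (o 0 / r 0))
        simpa using this
      exact h1.congr (fun k => (hρ k).symm)
    have htT' : Tendsto (fun k => υ * t (k + 1)) atTop (nhds 0) := by
      have := (htT.comp (tendsto_add_atTop_nat 1)).const_mul υ
      simpa [Function.comp] using this
    have hmax : Tendsto (fun k => max (ρ k) (υ * t (k + 1))) atTop (nhds 0) := by
      have := hρtend.max htT'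
      simpa using this
    refine tendsto_of_tendsto_of_tendsto_of_le_of_le' tendsto_const_nhds hmax
      (Eventually.of_forall fun k => div_nonneg (hrpos (k + 1)).le (hrpos k).le)
      (Eventually.of_forall fun k => ?_)
    rw [div_le_iff₀ (hrpos k)]
    rw [hrrec k]
    refine max_le ?_ ?_
    · calc r k * ρ k = ρ k * r k := mul_comm _ _
        _ ≤ max (ρ k) (υ * t (k + 1)) * r k :=
          mul_le_mul_of_nonneg_right (le_max_left _ _) (hrpos k).le
    · have heq : r 0 * υ ^ (k + 1) * P (k + 1) = υ * t (k + 1) * (r 0 * υ ^ k * P k) := by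
        rw [hPsucc k]; ring
      have ht0'' : 0 ≤ t (k + 1) := ht0' _ (by omega)
      calc r 0 * υ ^ (k + 1) * P (k + 1) = υ * t (k + 1) * (r 0 * υ ^ k * P k) := heq
        _ ≤ υ * t (k + 1) * r k :=
          mul_le_mul_of_nonneg_left (main k).2.2.2 (by positivity)
        _ ≤ max (ρ k) (υ * t (k + 1)) * r k :=
          mul_le_mul_of_nonneg_right (le_max_right _ _) (hrpos k).le
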